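/- For any linear order L, the following are equivalent: (i) L condenses to 1 under the countable condensation (for all x y : L, Set.uIcc x y is countable); (ii) there exists an order embedding of L into the ω₁-lengthened rational line U. That is, U is universal for linear orders that condense to 1 under ∼_ω. -/

import Mathlib

/-- The canonical linear order of order type `ω₁`. -/
noncomputable abbrev Omega1 : Type := (Cardinal.aleph 1).ord.ToType

/-- `ω₁` consecutive blocks, each consisting of one point followed by a copy of `ℚ`. -/
noncomputable abbrev Dline : Type := Lex (Omega1 × (PUnit ⊕ₗ ℚ))

/-- The `ω₁`-lengthened rational line `U`. -/
noncomputable abbrev Uline : Type := (OrderDual Dline) ⊕ₗ (ℚ ⊕ₗ Dline)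

instance : IsWellOrder Omega1 (· < ·) := isWellOrder_lt

open Set Cardinal Ordinal

lemma omega1_Iio_countable (x : Omega1) : (Set.Iio x).Countable :=
  (Cardinal.countable_iff_lt_aleph_one _).mpr (Cardinal.mk_Iio_ord_toType x)

lemma omega1_Iic_countable (x : Omega1) : (Set.Iic x).Countable := by
  rw [← Set.Iio_insert]
  exact (omega1_Iio_countable x).insert x

lemma dline_Iic_countable (d : Dline) : (Set.Iic d).Countable := by
  have h := (omega1_Iic_countable (ofLex d).1).to_subtype
  haveI : Countable (PUnit ⊕ₗ ℚ) := inferInstanceAs (Countable (PUnit ⊕ ℚ))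
  apply Set.Countable.mono (s₂ := Set.range
    (fun q : ↥(Set.Iic (ofLex d).1) × (PUnit ⊕ₗ ℚ) => (toLex (q.1.1, q.2) : Dline)))
  · intro p hp
    have hle : (ofLex p).1 ≤ (ofLex d).1 := by
      rcases (Prod.Lex.le_iff (x := p) (y := d)).1 hp with h | ⟨h, _⟩
      · exact h.le
      · exact h.le
    exact ⟨(⟨(ofLex p).1, hle⟩, (ofLex p).2), rfl⟩
  · exact Set.countable_range _

lemma dline_Icc_countable (d d' : Dline) : (Set.Icc d d').Countable :=
  (dline_Iic_countable d').mono Set.Icc_subset_Iic_self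

lemma sumLex_Iic_countable {A B : Type*} [LinearOrder A] [LinearOrder B] [Countable A]
    (hB : ∀ b : B, (Set.Iic b).Countable) (z : A ⊕ₗ B) : (Set.Iic z).Countable := by
  obtain a | b := z
  · apply Set.Countable.mono (s₂ := Set.range (fun p : A => (toLex (Sum.inl p) : A ⊕ₗ B)))
    · rintro (w | w) hw
      · exact ⟨w, rfl⟩
      · exact absurd hw Sum.Lex.not_inr_le_inl
    · exact Set.countable_range _
  · have := (hB b).to_subtype
    apply Set.Countable.mono (s₂ := Set.range
      (Sum.elim (fun p : A => (toLex (Sum.inl p) : A ⊕ₗ B))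
        (fun p : ↥(Set.Iic b) => (toLex (Sum.inr p.1) : A ⊕ₗ B))))
    · rintro (w | w) hw
      · exact ⟨Sum.inl w, rfl⟩
      · exact ⟨Sum.inr ⟨w, Sum.Lex.inr_le_inr_iff.mp hw⟩, rfl⟩
    · exact Set.countable_range _

lemma sumLex_Icc_countable {A B : Type*} [LinearOrder A] [LinearOrder B]
    (hA : ∀ a a' : A, (Set.Icc a a').Countable) (hA' : ∀ a : A, (Set.Ici a).Countable)
    (hB : ∀ b b' : B, (Set.Icc b b').Countable) (hB' : ∀ b : B, (Set.Iic b).Countable)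
    (x y : A ⊕ₗ B) : (Set.Icc x y).Countable := by
  obtain a | b := x
  · obtain a' | b' := y
    · have := (hA a a').to_subtype
      apply Set.Countable.mono (s₂ := Set.range
        (fun p : ↥(Set.Icc a a') => (toLex (Sum.inl p.1) : A ⊕ₗ B)))
      · rintro (w | w) ⟨hw1, hw2⟩
        · exact ⟨⟨w, Sum.Lex.inl_le_inl_iff.mp hw1, Sum.Lex.inl_le_inl_iff.mp hw2⟩, rfl⟩
        · exact absurd hw2 Sum.Lex.not_inr_le_inl
      · exact Set.countable_range _
    · have h1 := (hA' a).to_subtype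
      have h2 := (hB' b').to_subtype
      apply Set.Countable.mono (s₂ := Set.range
        (Sum.elim (fun p : ↥(Set.Ici a) => (toLex (Sum.inl p.1) : A ⊕ₗ B))
          (fun p : ↥(Set.Iic b') => (toLex (Sum.inr p.1) : A ⊕ₗ B))))
      · rintro (w | w) ⟨hw1, hw2⟩
        · exact ⟨Sum.inl ⟨w, Sum.Lex.inl_le_inl_iff.mp hw1⟩, rfl⟩
        · exact ⟨Sum.inr ⟨w, Sum.Lex.inr_le_inr_iff.mp hw2⟩, rfl⟩
      · exact Set.countable_range _
  · obtain a' | b' := y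
    · apply Set.Countable.mono (s₂ := (∅ : Set (A ⊕ₗ B)))
      · rintro (w | w) ⟨hw1, hw2⟩
        · exact absurd hw1 Sum.Lex.not_inr_le_inl
        · exact absurd hw2 Sum.Lex.not_inr_le_inl
      · exact Set.countable_empty
    · have := (hB b b').to_subtype
      apply Set.Countable.mono (s₂ := Set.range
        (fun p : ↥(Set.Icc b b') => (toLex (Sum.inr p.1) : A ⊕ₗ B)))
      · rintro (w | w) ⟨hw1, hw2⟩
        · exact absurd hw1 Sum.Lex.not_inr_le_inl
        · exact ⟨⟨w, Sum.Lex.inr_le_inr_iff.mp hw1, Sum.Lex.inr_le_inr_iff.mp hw2⟩, rfl⟩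
      · exact Set.countable_range _

lemma uline_Icc_countable (x y : Uline) : (Set.Icc x y).Countable := by
  apply sumLex_Icc_countable
  · intro a a'
    have h : Set.Icc a a' =
        (OrderDual.ofDual) ⁻¹' Set.Icc (OrderDual.ofDual a') (OrderDual.ofDual a) := by
      ext z; simp [Set.mem_Icc, and_comm]
    rw [h]
    exact (dline_Icc_countable _ _).preimage OrderDual.ofDual.injective
  · intro a
    have h : Set.Ici a = (OrderDual.ofDual) ⁻¹' Set.Iic (OrderDual.ofDual a) := rfl
    rw [h]
    exact (dline_Iic_countable _).preimage OrderDual.ofDual.injective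
  · intro b b'
    exact sumLex_Icc_countable (fun _ _ => Set.to_countable _) (fun _ => Set.to_countable _)
      dline_Icc_countable dline_Iic_countable b b'
  · intro b
    exact sumLex_Iic_countable dline_Iic_countable b


universe u

lemma embeds_into_dline (M : Type u) [LinearOrder M] (hM : ∀ y : M, (Set.Iic y).Countable) :
    Nonempty (M ↪o Dline) := by
  classical
  rcases isEmpty_or_nonempty M with hE | hE
  · exact ⟨OrderEmbedding.ofIsEmpty⟩
  set r : M → M → Prop := WellOrderingRel with hr
  haveI : IsWellOrder M r := WellOrderingRel.isWellOrder
  have wf : WellFounded r := (WellOrderingRel.isWellOrder (α := M)).wf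
  set φ : M → M := fun y => wf.min {z | y ≤ z} ⟨y, le_rfl⟩ with hφ
  have hφ_le : ∀ y, y ≤ φ y := fun y => wf.min_mem _ ⟨y, le_rfl⟩
  have hφ_not : ∀ y z, y ≤ z → ¬ r z (φ y) := fun y z h => wf.not_lt_min _ h
  have hφ_mono : ∀ {y y' : M}, y ≤ y' → ¬ r (φ y') (φ y) :=
    fun {y y'} h => hφ_not y (φ y') (h.trans (hφ_le y'))
  set S : Set M := Set.range φ with hS
  haveI : IsWellOrder (Subtype S) (Subrel r S) := (Subrel.relEmbedding r S).isWellOrder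
  -- initial segments of (S, r) are countable
  have hseg : ∀ a : S, Countable {b : S // Subrel r S b a} := by
    rintro ⟨-, y, rfl⟩
    have hinj : Function.Injective
        (fun b : {b : S // Subrel r S b ⟨φ y, ⟨y, rfl⟩⟩} =>
          (⟨b.1.1, by
            have hb : r b.1.1 (φ y) := b.2
            by_contra hgt
            have hyb : y ≤ b.1.1 := le_of_lt (lt_of_le_of_lt (hφ_le y) (lt_of_not_ge hgt))
            exact hφ_not y b.1.1 hyb hb⟩ : ↥(Set.Iic (φ y)))) := by
      intro b b' hbb
      have h2 : b.1.1 = b'.1.1 := congrArg (fun q : ↥(Set.Iic (φ y)) => (q : M)) hbb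
      ext1; ext1
      exact h2
    have := (hM (φ y)).to_subtype
    exact hinj.countable
  -- order type of (S, r) is at most ω₁
  have ht : Ordinal.type (Subrel r S) ≤ (Cardinal.aleph 1).ord := by
    by_contra hcon
    push_neg at hcon
    obtain ⟨x, hx⟩ := Ordinal.typein_surj (Subrel r S) hcon
    have h1 : (Cardinal.aleph 1) = #{b // Subrel r S b x} := by
      rw [← Cardinal.card_ord (Cardinal.aleph 1), ← hx, Ordinal.card_typein]
    have h2 : #{b // Subrel r S b x} ≤ Cardinal.aleph0 :=
      @Cardinal.mk_le_aleph0 _ (hseg x)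
    rw [← h1] at h2
    exact absurd h2 (not_le.mpr Cardinal.aleph0_lt_aleph_one)
  have ht2 : Ordinal.lift.{0} (Ordinal.type (Subrel r S)) ≤
      Ordinal.lift.{u} (Ordinal.type ((· < ·) : Omega1 → Omega1 → Prop)) := by
    rw [Ordinal.lift_uzero, Ordinal.type_toType, Cardinal.lift_ord, Cardinal.lift_aleph,
      Ordinal.lift_one]
    exact ht
  obtain ⟨ι0⟩ : Nonempty (InitialSeg (Subrel r S) ((· < ·) : Omega1 → Omega1 → Prop)) :=
    Ordinal.lift_type_le.{u, 0, 0}.mp ht2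
  let ι : Subrel r S ↪r ((· < ·) : Omega1 → Omega1 → Prop) := ι0.toRelEmbedding
  -- fibers of φ are countable
  have hfib : ∀ m : M, Countable {y : M // φ y = m} := by
    intro m
    have := (hM m).to_subtype
    have hinj : Function.Injective
        (fun y : {y : M // φ y = m} => (⟨y.1, le_trans (hφ_le y.1) (le_of_eq y.2)⟩ : ↥(Set.Iic m))) := by
      intro a b hab
      have h2 : a.1 = b.1 := congrArg (fun q : ↥(Set.Iic m) => (q : M)) hab
      ext1
      exact h2
    exact hinj.countable
  -- embed each fiber into ℚ
  have he : ∀ m : M, Nonempty ({y : M // φ y = m} ↪o ℚ) := by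
    intro m
    have := hfib m
    exact Order.embedding_from_countable_to_dense _ _
  let e : ∀ m : M, {y : M // φ y = m} ↪o ℚ := fun m => (he m).some
  have ecast : ∀ {m m' : M} (_ : m = m') (z : M) (h1 : φ z = m) (h2 : φ z = m'),
      e m ⟨z, h1⟩ = e m' ⟨z, h2⟩ := by
    rintro m - rfl z h1 h2
    rfl
  let j : ℚ ↪o (PUnit ⊕ₗ ℚ) := OrderEmbedding.ofStrictMono (fun q => toLex (Sum.inr q))
    (fun a b h => Sum.Lex.inr_lt_inr_iff.mpr h)
  refine ⟨OrderEmbedding.ofStrictMono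
    (fun y => (toLex (ι ⟨φ y, ⟨y, rfl⟩⟩, j (e (φ y) ⟨y, rfl⟩)) : Dline)) ?_⟩
  intro y y' hlt
  rcases eq_or_ne (φ y) (φ y') with heq | hne
  · apply (Prod.Lex.lt_iff (x := _) (y := _)).mpr
    right
    refine ⟨congrArg ι (Subtype.ext heq), ?_⟩
    apply j.strictMono
    rw [ecast heq.symm y' rfl heq.symm]
    exact (e (φ y)).strictMono (show (⟨y, rfl⟩ : {z : M // φ z = φ y}) < ⟨y', heq.symm⟩ from hlt)
  · have hrel : r (φ y) (φ y') := by
      rcases trichotomous_of r (φ y) (φ y') with h | h | h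
      · exact h
      · exact absurd h hne
      · exact absurd h (hφ_mono hlt.le)
    apply (Prod.Lex.lt_iff (x := _) (y := _)).mpr
    left
    exact ι.map_rel_iff.mpr hrel

/-- (Theorem 3.14) A linear order `L` condenses to `1` under the
countable condensation if and only if it order-embeds into the `ω₁`-lengthened rational
line `U`: `U` is universal for linear orders condensing to `1` under `∼_ω`. -/
theorem condenses_to_one_iff_embeds_into_Uline
    (L : Type*) [LinearOrder L] :
    (∀ x y : L, (Set.uIcc x y).Countable) ↔ Nonempty (L ↪o Uline) := by
  constructor
  · intro h
    rcases isEmpty_or_nonempty L with hE | ⟨⟨x₀⟩⟩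
    · exact ⟨OrderEmbedding.ofIsEmpty⟩
    · have hUp : ∀ y : {z : L // x₀ ≤ z}, (Set.Iic y).Countable := by
        intro y
        apply Set.Countable.mono (s₂ := Subtype.val ⁻¹' (Set.uIcc x₀ y.1))
        · intro z hz
          rw [Set.mem_preimage, Set.uIcc_of_le y.2, Set.mem_Icc]
          exact ⟨z.2, hz⟩
        · exact (h x₀ y.1).preimage Subtype.val_injective
      have hLo : ∀ y : ({z : L // z < x₀})ᵒᵈ, (Set.Iic y).Countable := by
        intro y
        apply Set.Countable.mono
          (s₂ := (fun z : ({z : L // z < x₀})ᵒᵈ => ((OrderDual.ofDual z).1 : L)) ⁻¹'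
            (Set.uIcc (OrderDual.ofDual y).1 x₀))
        · intro z hz
          rw [Set.mem_preimage, Set.uIcc_of_le (le_of_lt (OrderDual.ofDual y).2), Set.mem_Icc]
          exact ⟨hz, le_of_lt (OrderDual.ofDual z).2⟩
        · exact (h (OrderDual.ofDual y).1 x₀).preimage
            (Subtype.val_injective.comp (OrderDual.ofDual.injective))
      obtain ⟨f⟩ := embeds_into_dline (({z : L // z < x₀})ᵒᵈ) hLo
      obtain ⟨g⟩ := embeds_into_dline ({z : L // x₀ ≤ z}) hUp
      refine ⟨OrderEmbedding.ofStrictMono (fun z =>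
        if hz : z < x₀ then
          (toLex (Sum.inl (OrderDual.toDual (f (OrderDual.toDual ⟨z, hz⟩)))) : Uline)
        else
          (toLex (Sum.inr (toLex (Sum.inr (g ⟨z, not_lt.mp hz⟩)))) : Uline)) ?_⟩
      intro z z' hzz
      beta_reduce
      by_cases hz : z < x₀ <;> by_cases hz' : z' < x₀
      · rw [dif_pos hz, dif_pos hz']
        apply Sum.Lex.inl_lt_inl_iff.mpr
        exact OrderDual.toDual_lt_toDual.mpr
          (f.strictMono (OrderDual.toDual_lt_toDual.mpr (Subtype.mk_lt_mk.mpr hzz)))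
      · rw [dif_pos hz, dif_neg hz']
        exact Sum.Lex.inl_lt_inr _ _
      · exact absurd (hzz.trans hz') hz
      · rw [dif_neg hz, dif_neg hz']
        exact Sum.Lex.inr_lt_inr_iff.mpr (Sum.Lex.inr_lt_inr_iff.mpr
          (g.strictMono (Subtype.mk_lt_mk.mpr hzz)))
  · rintro ⟨f⟩ x y
    have hsub : Set.uIcc x y ⊆ f ⁻¹' (Set.Icc (f (x ⊓ y)) (f (x ⊔ y))) := by
      intro z hz
      exact ⟨f.monotone hz.1, f.monotone hz.2⟩
    exact ((uline_Icc_countable _ _).preimage f.injective).mono hsub
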